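/- Continuity of Rényi entropy in the order near 1: for any quantum-classical state ρ_{AB} on finite-dimensional A (with |A| the dimension of A) there is a constant c such that for all n sufficiently close to 1 with n > 1, S(A|B)_ρ ≥ S_n(A|B)_ρ ≥ S(A|B)_ρ − c(n−1)(log|A|)², where S_n(A|B)_ρ = (1/(1−n)) log Σ_b p_b Tr(ρ_{A|b}^n). Consequently, lim_{n→1} S_n(A|B)_ρ = S(A|B)_ρ, with convergence uniform over all states on a fixed A. -/

import Mathlib

open Matrix
open scoped ComplexOrder

/-- Von Neumann entropy `S(A) = -Tr(A log A)`, via eigenvalues of a Hermitian matrix. -/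
noncomputable def vN {m : Type*} [Fintype m] [DecidableEq m] (A : Matrix m m ℂ) : ℝ :=
  if h : A.IsHermitian then -∑ i, h.eigenvalues i * Real.log (h.eigenvalues i) else 0

/-- `Tr(A^r)` for real `r`, via the eigenvalues of a Hermitian matrix
(`0^r = 0` for `r > 0`, so only the support contributes). -/
noncomputable def trRpow {m : Type*} [Fintype m] [DecidableEq m]
    (A : Matrix m m ℂ) (r : ℝ) : ℝ :=
  if h : A.IsHermitian then ∑ i, (h.eigenvalues i) ^ r else 0

/-- continuity of the Rényi entropy in the order near 1: for a fixed system
`A` of dimension `a ≥ 1` (and classical system `B` of size `b`), there are constants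
`c ≥ 0` and `δ > 0` such that for every quantum-classical state
`ρ_{AB} = Σ_b p_b ρ_{A|b} ⊗ |b⟩⟨b|` and every `n` with `1 < n < 1 + δ`,
`S(A|B) ≥ S_n(A|B) ≥ S(A|B) − c(n−1)(log|A|)²`, where
`S_n(A|B) = (1/(1−n)) log Σ_b p_b Tr(ρ_{A|b}^n)` and `S(A|B) = Σ_b p_b S(ρ_{A|b})`;
consequently `S_n(A|B) → S(A|B)` as `n → 1⁺`, uniformly over all states on the fixed `A`. -/

lemma exp_ge_sq {y : ℝ} (hy : 0 ≤ y) : y ^ 2 ≤ Real.exp y := by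
  have h := Real.add_one_le_exp (y / 4)
  have h4 : Real.exp y = (Real.exp (y / 4)) ^ 4 := by
    rw [← Real.exp_nat_mul]; ring_nf
  have hsq : y ≤ (Real.exp (y / 4)) ^ 2 := by nlinarith [sq_nonneg (y / 4 - 1)]
  have := pow_le_pow_left₀ hy hsq 2
  rw [h4]
  calc y ^ 2 ≤ ((Real.exp (y / 4)) ^ 2) ^ 2 := this
    _ = (Real.exp (y / 4)) ^ 4 := by ring

lemma x_log_sq_le {x : ℝ} (h0 : 0 ≤ x) (h1 : x ≤ 1) : x * (Real.log x) ^ 2 ≤ 1 := by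
  rcases h0.eq_or_lt with h | h
  · simp [← h]
  · have hlog : Real.log x ≤ 0 := Real.log_nonpos h0 h1
    have h2 : (Real.log x) ^ 2 ≤ Real.exp (-Real.log x) := by
      have := exp_ge_sq (neg_nonneg.mpr hlog)
      simpa using this
    have h3 : Real.exp (-Real.log x) = x⁻¹ := by
      rw [Real.exp_neg, Real.exp_log h]
    rw [h3] at h2
    calc x * (Real.log x) ^ 2 ≤ x * x⁻¹ := mul_le_mul_of_nonneg_left h2 h0
      _ = 1 := mul_inv_cancel₀ h.ne'

lemma exp_le_taylor {y : ℝ} (hy : y ≤ 0) : Real.exp y ≤ 1 + y + y ^ 2 / 2 := by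
  obtain ⟨z, hz0, rfl⟩ : ∃ z, 0 ≤ z ∧ y = -z := ⟨-y, by linarith, by ring⟩
  have hcube : 1 + z + z ^ 2 / 2 + z ^ 3 / 6 ≤ Real.exp z := by
    have h := Real.sum_le_exp_of_nonneg hz0 4
    have heq : ∑ i ∈ Finset.range 4, z ^ i / (Nat.factorial i) = 1 + z + z ^ 2 / 2 + z ^ 3 / 6 := by
      simp [Finset.sum_range_succ, Nat.factorial]
    linarith [heq ▸ h]
  have hmul : Real.exp (-z) * Real.exp z = 1 := by
    rw [← Real.exp_add]; simp
  have hB : (0:ℝ) ≤ 1 - z + z ^ 2 / 2 := by nlinarith [sq_nonneg (z - 1)]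
  have hprod : (1:ℝ) ≤ (1 + z + z ^ 2 / 2 + z ^ 3 / 6) * (1 - z + z ^ 2 / 2) := by
    nlinarith [pow_nonneg hz0 3, pow_nonneg hz0 4, pow_nonneg hz0 5]
  have key : 1 ≤ Real.exp z * (1 + (-z) + (-z) ^ 2 / 2) := by
    have hy2 : 1 + (-z) + (-z) ^ 2 / 2 = 1 - z + z ^ 2 / 2 := by ring
    rw [hy2]
    calc (1:ℝ) ≤ (1 + z + z ^ 2 / 2 + z ^ 3 / 6) * (1 - z + z ^ 2 / 2) := hprod
      _ ≤ Real.exp z * (1 - z + z ^ 2 / 2) := mul_le_mul_of_nonneg_right hcube hB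
  calc Real.exp (-z) = Real.exp (-z) * 1 := (mul_one _).symm
    _ ≤ Real.exp (-z) * (Real.exp z * (1 + (-z) + (-z) ^ 2 / 2)) :=
        mul_le_mul_of_nonneg_left key (Real.exp_pos _).le
    _ = (Real.exp (-z) * Real.exp z) * (1 + (-z) + (-z) ^ 2 / 2) := by ring
    _ = 1 + (-z) + (-z) ^ 2 / 2 := by rw [hmul, one_mul]

lemma trace_eq_sum_eigs {m : Type*} [Fintype m] [DecidableEq m]
    {A : Matrix m m ℂ} (hA : A.IsHermitian) :
    A.trace = ∑ i, (hA.eigenvalues i : ℂ) := by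
  conv_lhs => rw [hA.spectral_theorem]
  rw [Unitary.conjStarAlgAut_apply]
  rw [Matrix.trace_mul_cycle]
  rw [show (star (hA.eigenvectorUnitary : Matrix m m ℂ)) * (hA.eigenvectorUnitary : Matrix m m ℂ)
      = 1 from Matrix.mem_unitaryGroup_iff'.mp hA.eigenvectorUnitary.2]
  rw [one_mul, Matrix.trace_diagonal]
  simp

lemma classical_key {ι : Type*} [Fintype ι] (P lam : ι → ℝ)
    (hP : ∀ j, 0 ≤ P j) (hl0 : ∀ j, 0 ≤ lam j) (hl1 : ∀ j, lam j ≤ 1)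
    (hsum : ∑ j, P j * lam j = 1) {n : ℝ} (hn : 1 < n) :
    Real.exp ((1 - n) * (-∑ j, P j * (lam j * Real.log (lam j)))) ≤ ∑ j, P j * lam j ^ n ∧
    ∑ j, P j * lam j ^ n ≤ 1 + (1 - n) * (-∑ j, P j * (lam j * Real.log (lam j)))
      + (n - 1) ^ 2 / 2 * ∑ j, P j * (lam j * (Real.log (lam j)) ^ 2) := by
  classical
  set t : Finset ι := Finset.univ.filter (fun j => 0 < P j * lam j) with ht
  have hmemt : ∀ j ∈ t, 0 < P j ∧ 0 < lam j := by
    intro j hj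
    have hj' : 0 < P j * lam j := (Finset.mem_filter.mp hj).2
    constructor
    · rcases (hP j).eq_or_lt with h | h
      · exfalso; rw [← h, zero_mul] at hj'; exact lt_irrefl _ hj'
      · exact h
    · rcases (hl0 j).eq_or_lt with h | h
      · exfalso; rw [← h, mul_zero] at hj'; exact lt_irrefl _ hj'
      · exact h
  have hnotzero : ∀ j ∉ t, P j * lam j = 0 := by
    intro j hj
    by_contra h
    exact hj (Finset.mem_filter.mpr ⟨Finset.mem_univ _, lt_of_le_of_ne
      (mul_nonneg (hP j) (hl0 j)) (Ne.symm h)⟩)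
  have hw1 : ∑ j ∈ t, P j * lam j = 1 := by
    rw [← hsum]
    exact Finset.sum_subset (Finset.subset_univ t) (fun j _ hj => hnotzero j hj)
  -- sums over t equal sums over univ for the three relevant summands
  have hSigma : ∑ j ∈ t, P j * lam j * Real.log (lam j)
      = ∑ j, P j * (lam j * Real.log (lam j)) := by
    rw [show ∀ (f : ι → ℝ), (∑ j ∈ t, f j) = ∑ j ∈ t, f j from fun _ => rfl]
    rw [Finset.sum_congr rfl (fun j _ => (mul_assoc (P j) (lam j) (Real.log (lam j))))]
    exact Finset.sum_subset (Finset.subset_univ t) (fun j _ hj => by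
      rcases mul_eq_zero.mp (hnotzero j hj) with h | h
      · rw [h, zero_mul]
      · rw [h]; simp)
  have hfn : ∑ j ∈ t, (P j * lam j) * lam j ^ (n - 1) = ∑ j, P j * lam j ^ n := by
    have hcg : ∀ j ∈ t, (P j * lam j) * lam j ^ (n - 1) = P j * lam j ^ n := by
      intro j hj
      have hl := (hmemt j hj).2
      rw [mul_assoc, ← Real.rpow_one_add' (hl0 j) (by linarith : (1:ℝ) + (n-1) ≠ 0)]
      norm_num
    rw [Finset.sum_congr rfl hcg]
    exact Finset.sum_subset (Finset.subset_univ t) (fun j _ hj => by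
      rcases mul_eq_zero.mp (hnotzero j hj) with h | h
      · rw [h, zero_mul]
      · rw [h, Real.zero_rpow (by linarith : n ≠ 0), mul_zero])
  constructor
  · -- Jensen
    have hjen := (convexOn_exp).map_sum_le (t := t)
      (w := fun j => P j * lam j) (p := fun j => (n - 1) * Real.log (lam j))
      (fun j _ => mul_nonneg (hP j) (hl0 j)) hw1 (fun j _ => Set.mem_univ _)
    have hL : ∑ j ∈ t, (P j * lam j) • ((n - 1) * Real.log (lam j))
        = (n - 1) * ∑ j, P j * (lam j * Real.log (lam j)) := by
      rw [← hSigma, Finset.mul_sum]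
      exact Finset.sum_congr rfl (fun j _ => by simp [smul_eq_mul]; ring)
    have hR : ∑ j ∈ t, (P j * lam j) • Real.exp ((n - 1) * Real.log (lam j))
        = ∑ j, P j * lam j ^ n := by
      rw [← hfn]
      refine Finset.sum_congr rfl (fun j hj => ?_)
      have hl := (hmemt j hj).2
      rw [smul_eq_mul, Real.rpow_def_of_pos hl, mul_comm (Real.log (lam j)) (n-1)]
    rw [hL, hR] at hjen
    have : (1 - n) * (-∑ j, P j * (lam j * Real.log (lam j)))
        = (n - 1) * ∑ j, P j * (lam j * Real.log (lam j)) := by ring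
    rw [this]
    exact hjen
  · -- Taylor upper bound, pointwise then summed
    have hpt : ∀ j, P j * lam j ^ n ≤ P j * lam j + (n - 1) * (P j * (lam j * Real.log (lam j)))
        + (n - 1) ^ 2 / 2 * (P j * (lam j * (Real.log (lam j)) ^ 2)) := by
      intro j
      rcases (hl0 j).eq_or_lt with h | h
      · rw [← h, Real.zero_rpow (by linarith : n ≠ 0)]
        simp
      · have hlog : Real.log (lam j) ≤ 0 := Real.log_nonpos (hl0 j) (hl1 j)
        have hy : (n - 1) * Real.log (lam j) ≤ 0 :=
          mul_nonpos_of_nonneg_of_nonpos (by linarith) hlog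
        have htay := exp_le_taylor hy
        have hrw : lam j ^ n = lam j * Real.exp ((n - 1) * Real.log (lam j)) := by
          rw [Real.rpow_def_of_pos h]
          rw [show Real.log (lam j) * n = Real.log (lam j) + (n-1) * Real.log (lam j) by ring]
          rw [Real.exp_add, Real.exp_log h]
        rw [hrw]
        have h1 : lam j * Real.exp ((n - 1) * Real.log (lam j))
            ≤ lam j * (1 + (n - 1) * Real.log (lam j) + ((n - 1) * Real.log (lam j)) ^ 2 / 2) :=
          mul_le_mul_of_nonneg_left htay (hl0 j)
        have h2 := mul_le_mul_of_nonneg_left h1 (hP j)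
        calc P j * (lam j * Real.exp ((n - 1) * Real.log (lam j)))
            ≤ P j * (lam j * (1 + (n - 1) * Real.log (lam j)
                + ((n - 1) * Real.log (lam j)) ^ 2 / 2)) := h2
          _ = P j * lam j + (n - 1) * (P j * (lam j * Real.log (lam j)))
                + (n - 1) ^ 2 / 2 * (P j * (lam j * (Real.log (lam j)) ^ 2)) := by ring
    calc ∑ j, P j * lam j ^ n
        ≤ ∑ j, (P j * lam j + (n - 1) * (P j * (lam j * Real.log (lam j)))
            + (n - 1) ^ 2 / 2 * (P j * (lam j * (Real.log (lam j)) ^ 2))) :=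
          Finset.sum_le_sum (fun j _ => hpt j)
      _ = 1 + (1 - n) * (-∑ j, P j * (lam j * Real.log (lam j)))
            + (n - 1) ^ 2 / 2 * ∑ j, P j * (lam j * (Real.log (lam j)) ^ 2) := by
          rw [Finset.sum_add_distrib, Finset.sum_add_distrib, ← Finset.mul_sum, ← Finset.mul_sum,
            hsum]
          ring

theorem renyi_continuity_near_one (a b : ℕ) (ha : 0 < a) :
    ∃ c : ℝ, 0 ≤ c ∧ ∃ δ : ℝ, 0 < δ ∧
      ∀ (p : Fin b → ℝ), (∀ k, 0 ≤ p k) → (∑ k, p k) = 1 →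
      ∀ (ρ : Fin b → Matrix (Fin a) (Fin a) ℂ),
        (∀ k, (ρ k).PosSemidef) → (∀ k, (ρ k).trace = 1) →
        (∀ n : ℝ, 1 < n → n < 1 + δ →
            (1 / (1 - n)) * Real.log (∑ k, p k * trRpow (ρ k) n) ≤ ∑ k, p k * vN (ρ k)
          ∧ (∑ k, p k * vN (ρ k)) - c * (n - 1) * (Real.log a) ^ 2
              ≤ (1 / (1 - n)) * Real.log (∑ k, p k * trRpow (ρ k) n))
        ∧ Filter.Tendsto
            (fun n : ℝ => (1 / (1 - n)) * Real.log (∑ k, p k * trRpow (ρ k) n))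
            (nhdsWithin 1 (Set.Ioi 1)) (nhds (∑ k, p k * vN (ρ k))) := by
  refine ⟨2 * a, by positivity, 1, one_pos, ?_⟩
  intro p hp hp1 ρ hρ htr
  have hherm : ∀ k, (ρ k).IsHermitian := fun k => (hρ k).isHermitian
  set lam : Fin b → Fin a → ℝ := fun k => (hherm k).eigenvalues with hlam
  have hl0 : ∀ k i, 0 ≤ lam k i := fun k i => (hρ k).eigenvalues_nonneg i
  have hsum1 : ∀ k, ∑ i, lam k i = 1 := by
    intro k
    have h := trace_eq_sum_eigs (hherm k)
    rw [htr k] at h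
    have h2 : ((∑ i, lam k i : ℝ) : ℂ) = 1 := by push_cast; exact h.symm
    exact_mod_cast h2
  have hl1 : ∀ k i, lam k i ≤ 1 := by
    intro k i
    calc lam k i ≤ ∑ i', lam k i' :=
          Finset.single_le_sum (fun i' _ => hl0 k i') (Finset.mem_univ i)
      _ = 1 := hsum1 k
  have hvN : ∀ k, vN (ρ k) = -∑ i, lam k i * Real.log (lam k i) := by
    intro k; rw [vN, dif_pos (hherm k)]
  have htrR : ∀ k (n : ℝ), trRpow (ρ k) n = ∑ i, lam k i ^ n := by
    intro k n; rw [trRpow, dif_pos (hherm k)]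
  -- product-index notation
  set P : Fin b × Fin a → ℝ := fun j => p j.1 with hP
  set L : Fin b × Fin a → ℝ := fun j => lam j.1 j.2 with hL
  have hsumPL : ∑ j, P j * L j = 1 := by
    rw [Fintype.sum_prod_type]
    calc ∑ k, ∑ i, p k * lam k i = ∑ k, p k * ∑ i, lam k i := by
          simp [Finset.mul_sum]
      _ = 1 := by simp [hsum1, hp1]
  have hS : ∑ k, p k * vN (ρ k) = -∑ j, P j * (L j * Real.log (L j)) := by
    rw [Fintype.sum_prod_type]
    rw [← Finset.sum_neg_distrib]
    refine Finset.sum_congr rfl (fun k _ => ?_)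
    rw [hvN k, mul_neg, Finset.mul_sum]
  have hfval : ∀ n : ℝ, ∑ k, p k * trRpow (ρ k) n = ∑ j, P j * L j ^ n := by
    intro n
    rw [Fintype.sum_prod_type]
    refine Finset.sum_congr rfl (fun k _ => ?_)
    rw [htrR k n, Finset.mul_sum]
  -- variance bound
  set V : ℝ := ∑ j, P j * (L j * Real.log (L j) ^ 2) with hV
  have hV0 : 0 ≤ V := Finset.sum_nonneg (fun j _ => mul_nonneg (hp _)
    (mul_nonneg (hl0 _ _) (sq_nonneg _)))
  have hVle : V ≤ 4 * a * (Real.log a) ^ 2 := by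
    rcases Nat.lt_or_ge a 2 with h2 | h2
    · obtain rfl : a = 1 := by omega
      have : V = 0 := by
        rw [hV]
        refine Finset.sum_eq_zero (fun j _ => ?_)
        have : L j = 1 := by
          have := hsum1 j.1
          rw [show L j = lam j.1 j.2 from rfl, Subsingleton.elim j.2 0]
          rw [Fin.sum_univ_one] at this
          exact this
        rw [this]; simp
      rw [this]; positivity
    · have hVa : V ≤ (a : ℝ) := by
        calc V ≤ ∑ j : Fin b × Fin a, P j * 1 := by
              refine Finset.sum_le_sum (fun j _ => ?_)
              exact mul_le_mul_of_nonneg_left (x_log_sq_le (hl0 _ _) (hl1 _ _)) (hp _)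
          _ = (a : ℝ) := by
              rw [Fintype.sum_prod_type]
              simp [hP, Finset.sum_const, mul_comm]
              rw [← Finset.sum_mul, hp1]; simp
      have hlog2 : (1:ℝ)/2 ≤ Real.log a := by
        calc (1:ℝ)/2 ≤ Real.log 2 := by
              have := Real.log_two_gt_d9; linarith
          _ ≤ Real.log a := Real.log_le_log (by norm_num) (by exact_mod_cast h2)
      have hla : (0:ℝ) < a := by positivity
      have hq : (1:ℝ)/4 ≤ (Real.log a) ^ 2 := by nlinarith
      nlinarith [mul_le_mul_of_nonneg_left hq (by positivity : (0:ℝ) ≤ 4 * a)]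
  -- main bounds for all n > 1
  have hmain : ∀ n : ℝ, 1 < n →
      (1 / (1 - n)) * Real.log (∑ k, p k * trRpow (ρ k) n) ≤ ∑ k, p k * vN (ρ k)
      ∧ (∑ k, p k * vN (ρ k)) - 2 * a * (n - 1) * (Real.log a) ^ 2
          ≤ (1 / (1 - n)) * Real.log (∑ k, p k * trRpow (ρ k) n) := by
    intro n hn
    obtain ⟨hkey1, hkey2⟩ := classical_key P L (fun j => hp j.1) (fun j => hl0 j.1 j.2)
      (fun j => hl1 j.1 j.2) hsumPL hn
    set S : ℝ := ∑ k, p k * vN (ρ k) with hSdef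
    set f : ℝ := ∑ k, p k * trRpow (ρ k) n with hfdef
    have hfeq : f = ∑ j, P j * L j ^ n := hfval n
    rw [← hS, ← hfeq] at hkey1
    rw [← hS, ← hfeq] at hkey2
    have hfpos : 0 < f := lt_of_lt_of_le (Real.exp_pos _) hkey1
    have h1n : (1:ℝ) - n ≠ 0 := by linarith
    have hcoef : 1 / (1 - n) ≤ 0 := by
      apply div_nonpos_of_nonneg_of_nonpos <;> linarith
    constructor
    · have hlog : (1 - n) * S ≤ Real.log f := (Real.le_log_iff_exp_le hfpos).mpr hkey1
      have := mul_le_mul_of_nonpos_left hlog hcoef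
      calc (1 / (1 - n)) * Real.log f ≤ (1 / (1 - n)) * ((1 - n) * S) := this
        _ = S := by field_simp
    · have hlogle : Real.log f ≤ f - 1 := Real.log_le_sub_one_of_pos hfpos
      have hVle2 : (n - 1) ^ 2 / 2 * V ≤ 2 * a * (n - 1) ^ 2 * (Real.log a) ^ 2 := by
        have := mul_le_mul_of_nonneg_left hVle (show (0:ℝ) ≤ (n - 1) ^ 2 / 2 by positivity)
        calc (n - 1) ^ 2 / 2 * V ≤ (n - 1) ^ 2 / 2 * (4 * a * (Real.log a) ^ 2) := this
          _ = 2 * a * (n - 1) ^ 2 * (Real.log a) ^ 2 := by ring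
      have hlf : Real.log f ≤ (1 - n) * (S - 2 * a * (n - 1) * (Real.log a) ^ 2) := by
        have : Real.log f ≤ 1 + (1 - n) * S + (n - 1) ^ 2 / 2 * V - 1 := by linarith
        calc Real.log f ≤ (1 - n) * S + (n - 1) ^ 2 / 2 * V := by linarith
          _ ≤ (1 - n) * S + 2 * a * (n - 1) ^ 2 * (Real.log a) ^ 2 := by linarith
          _ = (1 - n) * (S - 2 * a * (n - 1) * (Real.log a) ^ 2) := by ring
      have := mul_le_mul_of_nonpos_left hlf hcoef
      calc S - 2 * a * (n - 1) * (Real.log a) ^ 2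
          = (1 / (1 - n)) * ((1 - n) * (S - 2 * a * (n - 1) * (Real.log a) ^ 2)) := by
            field_simp
        _ ≤ (1 / (1 - n)) * Real.log f := this
  refine ⟨fun n hn _ => hmain n hn, ?_⟩
  -- squeeze
  set S : ℝ := ∑ k, p k * vN (ρ k) with hSdef
  have hlowtend : Filter.Tendsto (fun n : ℝ => S - 2 * a * (n - 1) * (Real.log a) ^ 2)
      (nhdsWithin 1 (Set.Ioi 1)) (nhds S) := by
    have hc : Continuous (fun n : ℝ => S - 2 * a * (n - 1) * (Real.log a) ^ 2) :=
      continuous_const.sub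
        ((continuous_const.mul (continuous_id.sub continuous_const)).mul continuous_const)
    have h' := (hc.tendsto 1).mono_left (nhdsWithin_le_nhds (s := Set.Ioi (1:ℝ)))
    simpa using h'
  have huptend : Filter.Tendsto (fun _ : ℝ => S) (nhdsWithin 1 (Set.Ioi 1)) (nhds S) :=
    tendsto_const_nhds
  refine tendsto_of_tendsto_of_tendsto_of_le_of_le' hlowtend huptend ?_ ?_
  · filter_upwards [self_mem_nhdsWithin] with n hn
    exact (hmain n hn).2
  · filter_upwards [self_mem_nhdsWithin] with n hn
    exact (hmain n hn).1
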